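/- Let n ≥ 1 and m < n, let Z_1,…,Z_m and z_1,…,z_m be complex numbers, and put ω_l := ∑_{k=1}^m Z_k z_k^l for l = 0,…,2n−1. Then the determinant of the (n+1)×(n+1) matrix whose first row is (1, z, z², …, z^n) and whose remaining rows, indexed by i = 1,…,n, have entry ω_{i−1+j} in column j (columns indexed j = 0,…,n), is equal to zero for every z ∈ ℂ. -/

import Mathlib

lemma aux_not_li (n m : ℕ) (hm : m < n) (V : Type) [AddCommGroup V] [Module ℂ V]
    [FiniteDimensional ℂ V] (u : Fin m → V) (T : Fin n → V)
    (hTS : ∀ i, T i ∈ Submodule.span ℂ (Set.range u)) :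
    ¬ LinearIndependent ℂ T := by
  intro h
  set S := Submodule.span ℂ (Set.range u) with hS
  have h' : LinearIndependent ℂ (fun i => (⟨T i, hTS i⟩ : S)) :=
    h.of_comp S.subtype
  have h2 := h'.fintype_card_le_finrank
  have hfr : Module.finrank ℂ S ≤ m := by simpa [Set.finrank] using finrank_range_le_card (R := ℂ) u
  simp only [Fintype.card_fin] at h2
  omega

/-- if the moments come from an exponential sum with m < n terms, the
bordered Hankel generating determinant vanishes identically in z. -/
theorem stmt13 (n m : ℕ) (hn : 1 ≤ n) (hm : m < n) (z Z : Fin m → ℂ) (w : ℂ) :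
    Matrix.det (Matrix.of fun i j : Fin (n + 1) =>
      if (i : ℕ) = 0 then w ^ (j : ℕ)
      else ∑ k : Fin m, Z k * z k ^ ((i : ℕ) - 1 + (j : ℕ))) = 0 := by
  set M : Matrix (Fin (n+1)) (Fin (n+1)) ℂ := Matrix.of fun i j : Fin (n + 1) =>
      if (i : ℕ) = 0 then w ^ (j : ℕ)
      else ∑ k : Fin m, Z k * z k ^ ((i : ℕ) - 1 + (j : ℕ)) with hM
  set u : Fin m → (Fin (n+1) → ℂ) := fun k j => z k ^ (j : ℕ) with hu
  set T : Fin n → (Fin (n+1) → ℂ) := fun i => M i.succ with hT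
  have hTS : ∀ i, T i ∈ Submodule.span ℂ (Set.range u) := by
    intro i
    have h1 : T i = ∑ k, (Z k * z k ^ (i : ℕ)) • u k := by
      funext j
      simp only [hT, hM, hu, Matrix.of_apply, Finset.sum_apply, Pi.smul_apply,
        smul_eq_mul, Fin.val_succ]
      rw [if_neg (Nat.succ_ne_zero _)]
      refine Finset.sum_congr rfl fun k _ => ?_
      have : (i : ℕ) + 1 - 1 + (j : ℕ) = (i : ℕ) + (j : ℕ) := by omega
      rw [this, pow_add]; ring
    rw [h1]
    exact Submodule.sum_mem _ fun k _ => Submodule.smul_mem _ _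
      (Submodule.subset_span ⟨k, rfl⟩)
  have hnli : ¬ LinearIndependent ℂ T := aux_not_li n m hm _ u T hTS
  obtain ⟨g, hsum, i0, hi0⟩ := Fintype.not_linearIndependent_iff.mp hnli
  set c : Fin (n+1) → ℂ := Fin.cons 0 g with hc
  have hdet : ∃ v ≠ 0, Matrix.vecMul v M = 0 := by
    refine ⟨c, ?_, ?_⟩
    · intro h
      apply hi0
      have := congrFun h i0.succ
      simpa [hc] using this
    · funext j
      have := congrFun hsum j
      simp only [Finset.sum_apply, Pi.smul_apply, smul_eq_mul, Pi.zero_apply] at this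
      simp only [Matrix.vecMul, dotProduct, Pi.zero_apply]
      rw [Fin.sum_univ_succ]
      simpa [hc, hT] using this
  rw [← Matrix.exists_vecMul_eq_zero_iff]
  exact hdet
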